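/- If L ⊆ binom(X,2) is an edge-weight lasso for an X-tree T, then L is strongly non-bipartite, i.e. no connected component of the graph Γ(L) = (X, L) is bipartite. -/

import Mathlib

/- Common definitions for formalizing results of Dress, Huber & Steel,
   "Lassoing a phylogenetic tree I: Basic properties, shellings, and covers".

   Trees are modelled as simple graphs on an ambient vertex type `U`;
   the vertex set of the tree is the support of the graph (every vertex of a
   tree with at least two vertices has degree >= 1). -/

noncomputable section
open scoped Classical

namespace Lasso

variable {U : Type}

/-- The degree of a vertex. -/
def deg (G : SimpleGraph U) (v : U) : ℕ := (G.neighborSet v).ncard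

/-- A leaf is a vertex of degree `1`. -/
def IsLeaf (G : SimpleGraph U) (v : U) : Prop := deg G v = 1

/-- An interior vertex: a non-leaf vertex of the tree. -/
def Interior (G : SimpleGraph U) (v : U) : Prop := v ∈ G.support ∧ ¬ IsLeaf G v

/-- `G` is an `X`-tree: a finite tree without vertices of degree two whose
    leaf set is exactly `X`. -/
structure IsXTree (X : Set U) (G : SimpleGraph U) : Prop where
  support_finite : G.support.Finite
  support_nonempty : G.support.Nonempty
  connected : ∀ a ∈ G.support, ∀ b ∈ G.support, G.Reachable a b
  acyclic : G.IsAcyclic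
  no_deg_two : ∀ v : U, deg G v ≠ 2
  leaves_eq : X = {v : U | IsLeaf G v}

/-- An edge weighting of `G`: nonnegative, and zero away from the edges of `G`
    (so that it represents an element of `ℝ_{≥0}^E`). -/
structure IsWeighting (G : SimpleGraph U) (ω : Sym2 U → ℝ) : Prop where
  nonneg : ∀ e, 0 ≤ ω e
  zero_off : ∀ e, e ∉ G.edgeSet → ω e = 0

/-- A proper edge weighting: in addition strictly positive on interior edges
    (edges both of whose endpoints are non-leaves). -/
structure IsProperWeighting (G : SimpleGraph U) (ω : Sym2 U → ℝ)
    extends IsWeighting G ω : Prop where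
  interior_pos : ∀ e ∈ G.edgeSet, (∀ u ∈ e, ¬ IsLeaf G u) → 0 < ω e

/-- The set `E_T(x|y)` of edges separating `x` from `y`, i.e. the edges lying
    on every walk from `x` to `y` (in a tree: the edges of the path). -/
def pathEdges (G : SimpleGraph U) (x y : U) : Set (Sym2 U) :=
  {e | e ∈ G.edgeSet ∧ ∀ p : G.Walk x y, e ∈ p.edges}

/-- The induced distance `D_ω(x,y)`. -/
def tdist (G : SimpleGraph U) (ω : Sym2 U → ℝ) (x y : U) : ℝ :=
  ∑ᶠ e ∈ pathEdges G x y, ω e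

/-- Path edge set of an unordered pair. -/
def pairPathEdges (G : SimpleGraph U) (c : Sym2 U) : Set (Sym2 U) :=
  {e | e ∈ G.edgeSet ∧ ∀ x y : U, c = s(x, y) → ∀ p : G.Walk x y, e ∈ p.edges}

/-- `D_ω` on an unordered pair (a cord); `λ^T_c(ω)`. -/
def pdist (G : SimpleGraph U) (ω : Sym2 U → ℝ) (c : Sym2 U) : ℝ :=
  ∑ᶠ e ∈ pairPathEdges G c, ω e

/-- `(G,ω)` and `(G',ω')` are `L`-isometric. -/
def LIso (L : Set (Sym2 U)) (G : SimpleGraph U) (ω : Sym2 U → ℝ)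
    (G' : SimpleGraph U) (ω' : Sym2 U → ℝ) : Prop :=
  ∀ x y : U, s(x, y) ∈ L → tdist G ω x y = tdist G' ω' x y

/-- `L` is a set of cords of `X`: 2-element subsets of `X`. -/
def IsCordSet (X : Set U) (L : Set (Sym2 U)) : Prop :=
  ∀ c ∈ L, ¬ c.IsDiag ∧ ∀ u ∈ c, u ∈ X

/-- The union of all cords in `L`. -/
def cup (L : Set (Sym2 U)) : Set U := {v | ∃ c ∈ L, v ∈ c}

/-- `L` is an edge-weight lasso for `G`. -/
def EdgeWeightLasso (G : SimpleGraph U) (L : Set (Sym2 U)) : Prop :=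
  ∀ ω ω' : Sym2 U → ℝ, IsProperWeighting G ω → IsProperWeighting G ω' →
    LIso L G ω G ω' → ω = ω'

/-- `G ≃ G'` via a graph isomorphism fixing `X` pointwise. -/
def FixingIso (X : Set U) (G G' : SimpleGraph U) : Prop :=
  ∃ φ : G ≃g G', ∀ x ∈ X, φ x = x

/-- `(G,ω)` and `(G',ω')` are isometric: a graph isomorphism fixing `X`
    pointwise and preserving edge weights. -/
def FixingIsometry (X : Set U) (G G' : SimpleGraph U) (ω ω' : Sym2 U → ℝ) : Prop :=
  ∃ φ : G ≃g G', (∀ x ∈ X, φ x = x) ∧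
    ∀ e ∈ G.edgeSet, ω' (Sym2.map (fun u => φ u) e) = ω e

/-- `L` is a topological lasso for the `X`-tree `G`. -/
def TopologicalLasso (X : Set U) (G : SimpleGraph U) (L : Set (Sym2 U)) : Prop :=
  ∀ G' : SimpleGraph U, IsXTree X G' →
    ∀ ω ω' : Sym2 U → ℝ, IsProperWeighting G ω → IsProperWeighting G' ω' →
      LIso L G ω G' ω' → FixingIso X G G'

/-- `L` is a strong lasso for the `X`-tree `G`. -/
def StrongLasso (X : Set U) (G : SimpleGraph U) (L : Set (Sym2 U)) : Prop :=
  ∀ G' : SimpleGraph U, IsXTree X G' →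
    ∀ ω ω' : Sym2 U → ℝ, IsProperWeighting G ω → IsProperWeighting G' ω' →
      LIso L G ω G' ω' → FixingIsometry X G G' ω ω'

/-- `G` displays the quartet `a a' ‖ b b'`: some edge lies on all four paths
    joining `a` or `a'` to `b` or `b'`. -/
def DisplaysQ (G : SimpleGraph U) (a a' b b' : U) : Prop :=
  ∃ e : Sym2 U, e ∈ pathEdges G a b ∧ e ∈ pathEdges G a b' ∧
    e ∈ pathEdges G a' b ∧ e ∈ pathEdges G a' b'

def Distinct4 (a b c d : U) : Prop :=
  a ≠ b ∧ a ≠ c ∧ a ≠ d ∧ b ≠ c ∧ b ≠ d ∧ c ≠ d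

/-- `a a' ‖ b b' ∈ Q(G)`: a quartet on four distinct elements of `X`
    displayed by `G`. -/
def QuartetOf (X : Set U) (G : SimpleGraph U) (a a' b b' : U) : Prop :=
  a ∈ X ∧ a' ∈ X ∧ b ∈ X ∧ b' ∈ X ∧ Distinct4 a a' b b' ∧ DisplaysQ G a a' b b'

/-- `G` displays `a a' | b b'`: it displays neither `a b ‖ a' b'` nor
    `a b' ‖ a' b`. -/
def DisplaysBar (G : SimpleGraph U) (a a' b b' : U) : Prop :=
  ¬ DisplaysQ G a b a' b' ∧ ¬ DisplaysQ G a b' a' b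

/-- `A, B` is a virtual `T`-split of `X`. -/
def VirtualSplit (X : Set U) (G : SimpleGraph U) (A B : Set U) : Prop :=
  A.Nonempty ∧ B.Nonempty ∧ Disjoint A B ∧ A ∪ B = X ∧
    ∀ a ∈ A, ∀ a' ∈ A, ∀ b ∈ B, ∀ b' ∈ B, a ≠ a' → b ≠ b' → DisplaysBar G a a' b b'

/-- `G ≤ G'` (`G'` refines `G`), via the standard characterization
    `Q(T) ⊆ Q(T')` of refinement of `X`-trees. -/
def Refines (X : Set U) (G G' : SimpleGraph U) : Prop :=
  ∀ a a' b b' : U, QuartetOf X G a a' b b' → QuartetOf X G' a a' b b'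

/-- `L` is a weak lasso for (coralls) the `X`-tree `G`. -/
def WeakLasso (X : Set U) (G : SimpleGraph U) (L : Set (Sym2 U)) : Prop :=
  ∀ G' : SimpleGraph U, IsXTree X G' →
    ∀ ω ω' : Sym2 U → ℝ, IsProperWeighting G ω → IsProperWeighting G' ω' →
      LIso L G ω G' ω' → Refines X G G'

/-- The subgraph induced on a vertex set `A`. -/
def restrict {α : Type*} (Γ : SimpleGraph α) (A : Set α) : SimpleGraph α where
  Adj u v := Γ.Adj u v ∧ u ∈ A ∧ v ∈ A
  symm := by constructor; rintro u v ⟨h, hu, hv⟩; exact ⟨h.symm, hv, hu⟩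
  loopless := by constructor; rintro v ⟨h, _, _⟩; exact Γ.irrefl h

/-- The restriction of `Γ` to `A` is a connected graph. -/
def ConnectedOn {α : Type*} (Γ : SimpleGraph α) (A : Set α) : Prop :=
  ∀ x ∈ A, ∀ y ∈ A, (restrict Γ A).Reachable x y

/-- The connected component of `x` in `Γ` is bipartite. -/
def ComponentBipartite {α : Type*} (Γ : SimpleGraph α) (x : α) : Prop :=
  ∃ f : α → Bool, ∀ u v : α, Γ.Reachable x u → Γ.Adj u v → f u ≠ f v

/-- No connected component (of the graph with vertex set `S`) is bipartite. -/
def StronglyNonBipartite {α : Type*} (Γ : SimpleGraph α) (S : Set α) : Prop :=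
  ∀ x ∈ S, ¬ ComponentBipartite Γ x

/-- The graph `Γ` is bipartite. -/
def Bipartite {α : Type*} (Γ : SimpleGraph α) : Prop :=
  ∃ f : α → Bool, ∀ u v : α, Γ.Adj u v → f u ≠ f v

/-- `E_v`: the set of edges of `G` containing `v`. -/
def Ev (G : SimpleGraph U) (v : U) : Set (Sym2 U) := {e | e ∈ G.edgeSet ∧ v ∈ e}

/-- The graph `G(L,v)` on the edge set `E_v`: two distinct edges at `v` are
    adjacent if some cord of `L` has both on its path. -/
def covGraph (G : SimpleGraph U) (L : Set (Sym2 U)) (v : U) : SimpleGraph (Sym2 U) where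
  Adj e e' := e ≠ e' ∧ e ∈ Ev G v ∧ e' ∈ Ev G v ∧
    ∃ x y : U, s(x, y) ∈ L ∧ e ∈ pathEdges G x y ∧ e' ∈ pathEdges G x y
  symm := by
    constructor
    rintro e e' ⟨hne, he, he', x, y, hc, hp, hp'⟩
    exact ⟨hne.symm, he', he, x, y, hc, hp', hp⟩
  loopless := by constructor; rintro e ⟨hne, _⟩; exact hne rfl

/-- `G(L,v)` is the complete graph on `E_v`. -/
def CompleteAt (G : SimpleGraph U) (L : Set (Sym2 U)) (v : U) : Prop :=
  ∀ e ∈ Ev G v, ∀ e' ∈ Ev G v, e ≠ e' → (covGraph G L v).Adj e e'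

/-- `L` is a `t`-cover of `G`. -/
def TCover (X : Set U) (G : SimpleGraph U) (L : Set (Sym2 U)) : Prop :=
  cup L = X ∧ ∀ v : U, Interior G v → CompleteAt G L v

/-- The graph `Γ(L, c)` for the cord `c = x x'`, with vertex set `X − {x,x'}`
    and edge set `L^(c)`. -/
def cordGraphC (X : Set U) (G : SimpleGraph U) (L : Set (Sym2 U)) (x x' : U) :
    SimpleGraph U where
  Adj y y' := y ≠ y' ∧ y ≠ x ∧ y ≠ x' ∧ y' ≠ x ∧ y' ≠ x' ∧
    s(y, y') ∈ L ∧ QuartetOf X G x x' y y' ∧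
    ((s(x, y) ∈ L ∧ s(x', y') ∈ L) ∨ (s(x, y') ∈ L ∧ s(x', y) ∈ L))
  symm := by
    constructor
    rintro y y' ⟨hne, h1, h2, h3, h4, hL,
      ⟨hx1, hx2, hy1, hy2, ⟨d1, d2, d3, d4, d5, d6⟩, e, p1, p2, p3, p4⟩, hor⟩
    exact ⟨hne.symm, h3, h4, h1, h2, by rwa [Sym2.eq_swap],
      ⟨hx1, hx2, hy2, hy1, ⟨d1, d3, d2, d5, d4, d6.symm⟩, e, p2, p1, p4, p3⟩, hor.symm⟩
  loopless := by constructor; rintro y ⟨hne, _⟩; exact hne rfl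

/-- `v` lies on the path of `G` from `x` to `y`. -/
def OnPath (G : SimpleGraph U) (x y v : U) : Prop :=
  v = x ∨ v = y ∨ ∃ e ∈ pathEdges G x y, v ∈ e

/-- `v = med_G(a,b,c)`: `v` lies on all three pairwise paths. -/
def IsMedian (G : SimpleGraph U) (a b c v : U) : Prop :=
  OnPath G a b v ∧ OnPath G a c v ∧ OnPath G b c v

/-- `L` is a triplet cover of `G`. -/
def TripletCover (X : Set U) (G : SimpleGraph U) (L : Set (Sym2 U)) : Prop :=
  ∀ v : U, Interior G v → ∃ a b c : U, a ∈ X ∧ b ∈ X ∧ c ∈ X ∧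
    a ≠ b ∧ a ≠ c ∧ b ≠ c ∧
    s(a, b) ∈ L ∧ s(a, c) ∈ L ∧ s(b, c) ∈ L ∧ IsMedian G a b c v

/-- `L` is a pointed `x`-cover of `G`. -/
def PointedCover (X : Set U) (G : SimpleGraph U) (L : Set (Sym2 U)) (x : U) : Prop :=
  cup L = X ∧ (∀ v : U, Interior G v → CompleteAt G L v) ∧
    ∀ v : U, Interior G v → ∃ a b : U, a ≠ b ∧
      s(a, x) ∈ L ∧ s(b, x) ∈ L ∧ IsMedian G a b x v

/-- Every interior vertex has degree `3`. -/
def IsBinary (G : SimpleGraph U) : Prop := ∀ v : U, Interior G v → deg G v = 3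

/-- `a, b` form a `T`-cherry with common neighbour `v`. -/
def IsCherry (G : SimpleGraph U) (a b v : U) : Prop :=
  a ≠ b ∧ IsLeaf G a ∧ IsLeaf G b ∧ G.Adj a v ∧ G.Adj b v

/-- `a, b` form a proper `T`-cherry with common neighbour `v` of degree `3`. -/
def IsProperCherry (G : SimpleGraph U) (a b v : U) : Prop :=
  IsCherry G a b v ∧ deg G v = 3

/-- `W` is a `T`-core of `G`. -/
def IsCore (G : SimpleGraph U) (W : Set U) : Prop :=
  W.Nonempty ∧ W ⊆ G.support ∧
    (∀ a ∈ W, ∀ b ∈ W, (restrict G W).Reachable a b) ∧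
    ∀ v ∈ W, deg (restrict G W) v = 1 ∨ deg (restrict G W) v = deg G v

/-- `X_W`: the leaf set of the induced tree `T_W`. -/
def coreLeaves (G : SimpleGraph U) (W : Set U) : Set U :=
  {v | v ∈ W ∧ deg (restrict G W) v = 1}

/-- `g` is the gate of `x` in `W`: the vertex of `W` closest to `x`. -/
def IsGate (G : SimpleGraph U) (W : Set U) (x g : U) : Prop :=
  g ∈ W ∧ ∀ w ∈ W, OnPath G x w g

/-- `L_W`: the cords induced on the gates. -/
def gateCords (G : SimpleGraph U) (W : Set U) (L : Set (Sym2 U)) : Set (Sym2 U) :=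
  {c | ∃ p q y y' : U, s(p, q) ∈ L ∧ IsGate G W p y ∧ IsGate G W q y' ∧
       y ≠ y' ∧ c = s(y, y')}

/-- The gate map of the cherry reduction: `a, b ↦ v`, all else fixed. -/
def cherryMap (a b v : U) : U → U := fun p => if p = a ∨ p = b then v else p

/-- `L_U` for the cherry reduction at the proper cherry `a,b` with neighbour `v`. -/
def cherryLU (L : Set (Sym2 U)) (a b v : U) : Set (Sym2 U) :=
  {c | ∃ p q : U, s(p, q) ∈ L ∧ cherryMap a b v p ≠ cherryMap a b v q ∧
       c = s(cherryMap a b v p, cherryMap a b v q)}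

/-- `X(a, L^{ab}) = {y : ay ∈ L − {ab}}`. -/
def sideSet (L : Set (Sym2 U)) (a b : U) : Set U :=
  {y | s(a, y) ∈ L ∧ s(a, y) ≠ s(a, b)}

/-- `Σ_{c ∈ LU} ρ(c)·λ^{TU}_c = 0` as a linear form on `ℝ^{E_U}`. -/
def RhoAnnihilates (TU : SimpleGraph U) (LU : Set (Sym2 U)) (ρ : Sym2 U → ℝ) : Prop :=
  ∀ η : Sym2 U → ℝ, (∀ e, e ∉ TU.edgeSet → η e = 0) →
    ∑ᶠ c ∈ LU, ρ c * pdist TU η c = 0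

/-- `D_ω(ab|cd)`. -/
def Dq (G : SimpleGraph U) (ω : Sym2 U → ℝ) (a b c d : U) : ℝ :=
  max (tdist G ω a c + tdist G ω b d) (tdist G ω a d + tdist G ω b c)
    - tdist G ω a b - tdist G ω c d

/-- The star tree on `X` with central vertex `z`. -/
def starGraph (X : Set U) (z : U) : SimpleGraph U :=
  SimpleGraph.fromEdgeSet {c | ∃ x ∈ X, c = s(x, z)}

/-- `A ∨ B`: all cords with one end in `A` and the other in `B`. -/
def vee (A B : Set U) : Set (Sym2 U) := {c | ∃ a ∈ A, ∃ b ∈ B, c = s(a, b)}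

/-- A `T`-shelling of `binom(X,2) − L` with cords `aᵢbᵢ` and pivots `pᵢ, qᵢ`. -/
def IsShelling (X : Set U) (G : SimpleGraph U) (L : Set (Sym2 U)) (m : ℕ)
    (a b p q : Fin m → U) : Prop :=
  (∀ i, a i ∈ X ∧ b i ∈ X ∧ a i ≠ b i ∧ s(a i, b i) ∉ L) ∧
  Function.Injective (fun i => s(a i, b i)) ∧
  (∀ x y : U, x ∈ X → y ∈ X → x ≠ y → s(x, y) ∉ L → ∃ i, s(x, y) = s(a i, b i)) ∧
  ∀ i : Fin m,
    p i ∈ X ∧ q i ∈ X ∧ p i ≠ q i ∧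
    p i ≠ a i ∧ p i ≠ b i ∧ q i ≠ a i ∧ q i ≠ b i ∧
    DisplaysQ G (a i) (p i) (b i) (q i) ∧
    ∀ u w : U, u ∈ ({a i, b i, p i, q i} : Set U) → w ∈ ({a i, b i, p i, q i} : Set U) →
      u ≠ w → s(u, w) ≠ s(a i, b i) →
      (s(u, w) ∈ L ∨ ∃ j : Fin m, j < i ∧ s(u, w) = s(a j, b j))

/-- `L` is an `s`-lasso for `G`. -/
def SLasso (X : Set U) (G : SimpleGraph U) (L : Set (Sym2 U)) : Prop :=
  cup L = X ∧ ∃ (m : ℕ) (a b p q : Fin m → U), IsShelling X G L m a b p q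

/-- `L'_{A,B}` of Corollary 3 (the cherry construction). -/
def LAB (L' : Set (Sym2 U)) (X : Set U) (a b : U) (A B : Set U) : Set (Sym2 U) :=
  {c | c ∈ L' ∧ ∀ u ∈ c, u ∈ X ∧ u ≠ a ∧ u ≠ b} ∪
  {c | ∃ x ∈ A ∪ {b}, c = s(a, x)} ∪
  {c | ∃ x ∈ B, c = s(b, x)}

end Lasso
namespace Lasso
variable {U : Type}

lemma walk_cons_of_ne {G : SimpleGraph U} {a b : U} (p : G.Walk a b) (h : a ≠ b) :
    ∃ (c : U) (hc : G.Adj a c) (q : G.Walk c b), p = SimpleGraph.Walk.cons hc q := by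
  cases p with
  | nil => exact absurd rfl h
  | cons hc q => exact ⟨_, hc, q, rfl⟩

lemma two_neighbors_of_internal {G : SimpleGraph U} {a b v : U} (p : G.Walk a b)
    (hp : p.IsPath) (hv : v ∈ p.support) (hva : v ≠ a) (hvb : v ≠ b) :
    ∃ w1 w2 : U, w1 ≠ w2 ∧ G.Adj v w1 ∧ G.Adj v w2 := by
  have hsp : p = (p.takeUntil v hv).append (p.dropUntil v hv) := (p.take_spec hv).symm
  have ht : (p.takeUntil v hv).IsPath := hp.takeUntil hv
  obtain ⟨w1, h1, q1, hq1⟩ := walk_cons_of_ne (p.takeUntil v hv).reverse hva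
  obtain ⟨w2, h2, q2, hq2⟩ := walk_cons_of_ne (p.dropUntil v hv) hvb
  refine ⟨w1, w2, ?_, h1, h2⟩
  have hw1 : w1 ∈ (p.takeUntil v hv).support := by
    have : w1 ∈ (p.takeUntil v hv).reverse.support := by
      rw [hq1]; simp [SimpleGraph.Walk.support_cons]
    rwa [SimpleGraph.Walk.support_reverse, List.mem_reverse] at this
  have hw2 : w2 ∈ (p.dropUntil v hv).support.tail := by
    rw [hq2]; simp [SimpleGraph.Walk.support_cons]
  have hnd : ((p.takeUntil v hv).support ++ (p.dropUntil v hv).support.tail).Nodup := by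
    have h2 := hp.support_nodup
    rw [hsp, SimpleGraph.Walk.support_append] at h2
    exact h2
  intro hEq
  exact (List.nodup_append'.mp hnd).2.2 hw1 (hEq ▸ hw2)

lemma leaf_not_internal {G : SimpleGraph U} {a b v : U} (p : G.Walk a b)
    (hp : p.IsPath) (hv : v ∈ p.support) (hva : v ≠ a) (hvb : v ≠ b)
    (hleaf : IsLeaf G v) : False := by
  obtain ⟨z, hz⟩ := Set.ncard_eq_one.mp hleaf
  obtain ⟨w1, w2, hne, ha1, ha2⟩ := two_neighbors_of_internal p hp hv hva hvb
  have e1 : w1 = z := by have : w1 ∈ G.neighborSet v := ha1; rw [hz] at this; exact this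
  have e2 : w2 = z := by have : w2 ∈ G.neighborSet v := ha2; rw [hz] at this; exact this
  exact hne (e1.trans e2.symm)

/-- sum over path edges of `g u + g v` telescopes. -/
lemma sum_pendant {G : SimpleGraph U} (g : U → ℝ) {a b : U} (p : G.Walk a b)
    (hp : p.IsPath) (hab : a ≠ b)
    (h0 : ∀ v ∈ p.support, v ≠ a → v ≠ b → g v = 0) :
    (p.edges.map (Sym2.lift ⟨fun u v => g u + g v, fun u v => by ring⟩)).sum
      = g a + g b := by
  induction p with
  | nil => exact absurd rfl hab
  | @cons a c b hac q ih =>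
    have hq : q.IsPath := hp.of_cons
    have hanotin : a ∉ q.support := (SimpleGraph.Walk.cons_isPath_iff _ _).mp hp |>.2
    by_cases hcb : c = b
    · subst hcb
      have hqnil : q = SimpleGraph.Walk.nil := SimpleGraph.Walk.isPath_iff_eq_nil.mp hq
      subst hqnil
      simp
    · have hgc : g c = 0 := by
        refine h0 c (by simp) (fun hca => hanotin (hca ▸ q.start_mem_support)) hcb
      have hsum := ih hq hcb (fun v hv hvc hvb =>
        h0 v (by simp [hv]) (fun hva => hanotin (hva ▸ hv)) hvb)
      simp only [SimpleGraph.Walk.edges_cons, List.map_cons, List.sum_cons, Sym2.lift_mk, hsum, hgc]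
      ring

lemma pathEdges_eq_walk_edges {G : SimpleGraph U} (hac : G.IsAcyclic) {a b : U}
    (p : G.Walk a b) (hp : p.IsPath) :
    pathEdges G a b = ↑p.edges.toFinset := by
  ext e
  simp only [pathEdges, Set.mem_setOf_eq, Finset.coe_sort_coe, Finset.mem_coe,
    List.mem_toFinset]
  constructor
  · rintro ⟨_, h2⟩; exact h2 p
  · intro he
    refine ⟨p.edges_subset_edgeSet he, fun w => ?_⟩
    have huniq := (SimpleGraph.isAcyclic_iff_path_unique.mp hac) ⟨p, hp⟩ ⟨w.bypass, w.bypass_isPath⟩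
    have hpb : p = w.bypass := congrArg Subtype.val huniq
    exact w.edges_bypass_subset (hpb ▸ he)

lemma tdist_eq_sum {G : SimpleGraph U} (hac : G.IsAcyclic) {a b : U}
    (p : G.Walk a b) (hp : p.IsPath) (η : Sym2 U → ℝ) :
    tdist G η a b = (p.edges.map η).sum := by
  rw [tdist, pathEdges_eq_walk_edges hac p hp, finsum_mem_coe_finset,
    List.sum_toFinset η hp.edges_nodup]

lemma no_leaf_adj {X : Set U} {G : SimpleGraph U}
    (hX3 : 3 ≤ X.ncard) (hT : IsXTree X G)
    {x w : U} (hx : IsLeaf G x) (hadj : G.Adj x w) : ¬ IsLeaf G w := by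
  intro hw
  obtain ⟨zx, hzx0⟩ := Set.ncard_eq_one.mp hx
  have hzx : G.neighborSet x = {w} := by
    have hmem : w ∈ G.neighborSet x := hadj
    rw [hzx0] at hmem
    rw [hzx0, hmem]
  -- claim X ⊆ {x, w}
  have hsub : X ⊆ {x, w} := by
    intro y hy
    have hyleaf : IsLeaf G y := by rw [hT.leaves_eq] at hy; exact hy
    obtain ⟨zy, hzy⟩ := Set.ncard_eq_one.mp hyleaf
    have hysup : y ∈ G.support := by
      rw [G.mem_support]
      exact ⟨zy, by have hm : zy ∈ G.neighborSet y := hzy ▸ rfl; exact hm⟩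
    have hxsup : x ∈ G.support := G.mem_support.mpr ⟨w, hadj⟩
    rw [Set.mem_insert_iff, Set.mem_singleton_iff]
    by_cases hyx : y = x
    · exact Or.inl hyx
    right
    by_contra hyw
    have hr := hT.connected x hxsup y hysup
    obtain ⟨p0⟩ := hr
    have hp := p0.bypass_isPath
    obtain ⟨c, hc, q, hcq⟩ := walk_cons_of_ne p0.bypass (fun hxy => hyx hxy.symm)
    have hcw : c = w := by
      have : c ∈ G.neighborSet x := hc
      rw [hzx] at this; exact this
    have hwin : w ∈ p0.bypass.support := by
      rw [hcq, SimpleGraph.Walk.support_cons]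
      exact List.mem_cons_of_mem _ (hcw ▸ q.start_mem_support)
    exact leaf_not_internal p0.bypass hp hwin (G.ne_of_adj hadj).symm
      (fun hwy => hyw hwy.symm) hw
  have : X.ncard ≤ 2 := by
    calc X.ncard ≤ ({x, w} : Set U).ncard :=
        Set.ncard_le_ncard hsub ((Set.finite_singleton w).insert x)
      _ ≤ 2 := (Set.ncard_insert_le _ _).trans (by simp)
  omega

lemma list_sum_map_add (l : List (Sym2 U)) (F Gg : Sym2 U → ℝ) :
    (l.map (fun e => F e + Gg e)).sum = (l.map F).sum + (l.map Gg).sum := by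
  induction l with
  | nil => simp
  | cons a l ih => simp only [List.map_cons, List.sum_cons, ih]; ring


/-- Theorem 2 (ii): if `L` is an edge-weight lasso for the `X`-tree `T`,
then `L` is strongly non-bipartite: no connected component of the graph
`Γ(L) = (X, L)` is bipartite. -/
theorem edgeWeightLasso_stronglyNonBipartite {U : Type}
    (X : Set U) (G : SimpleGraph U)
    (hXfin : X.Finite) (hX3 : 3 ≤ X.ncard) (hT : IsXTree X G)
    (L : Set (Sym2 U)) (hL : IsCordSet X L)
    (h : EdgeWeightLasso G L) :
    StronglyNonBipartite (SimpleGraph.fromEdgeSet L) X := by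
  intro x hx hcb
  obtain ⟨f, hf⟩ := hcb
  have hxleaf : IsLeaf G x := by rw [hT.leaves_eq] at hx; exact hx
  obtain ⟨w, hw⟩ := Set.ncard_eq_one.mp hxleaf
  have hadj : G.Adj x w := by
    have hm : w ∈ G.neighborSet x := by rw [hw]; exact Set.mem_singleton w
    exact hm
  have hwnl : ¬ IsLeaf G w := no_leaf_adj hX3 hT hxleaf hadj
  set Γ := SimpleGraph.fromEdgeSet L with hΓ
  set ε : U → ℝ := fun u => if Γ.Reachable x u then (if f u then 1/2 else -(1/2)) else 0 with hε
  set g : U → ℝ := fun u => if IsLeaf G u then ε u else 0 with hg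
  set D : Sym2 U → ℝ := Sym2.lift ⟨fun u v => g u + g v, fun u v => by ring⟩ with hD
  set δ : Sym2 U → ℝ := fun e => if e ∈ G.edgeSet then D e else 0 with hδ
  set ω : Sym2 U → ℝ := fun e => if e ∈ G.edgeSet then 1 else 0 with hω
  set ω' : Sym2 U → ℝ := fun e => ω e + δ e with hω'
  have hDmk : ∀ u v : U, D s(u, v) = g u + g v := fun u v => rfl
  have hgb : ∀ u, -(1/2 : ℝ) ≤ g u ∧ g u ≤ 1/2 := by
    intro u
    rw [hg, hε]
    simp only
    split
    · split
      · split <;> norm_num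
      · norm_num
    · norm_num
  have hgleaf : ∀ u, IsLeaf G u → g u = ε u := by
    intro u hu; rw [hg]; exact if_pos hu
  have hgnl : ∀ u, ¬ IsLeaf G u → g u = 0 := by
    intro u hu; rw [hg]; exact if_neg hu
  have hWω : IsProperWeighting G ω := by
    refine ⟨⟨fun e => ?_, fun e he => ?_⟩, fun e he _ => ?_⟩
    · rw [hω]; simp only; split <;> norm_num
    · rw [hω]; simp only; rw [if_neg he]
    · rw [hω]; simp only; rw [if_pos he]; norm_num
  have hWω' : IsProperWeighting G ω' := by
    refine ⟨⟨fun e => ?_, fun e he => ?_⟩, fun e he hint => ?_⟩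
    · induction e using Sym2.ind with
      | _ u v =>
        rw [hω', hω, hδ]
        simp only
        by_cases he : s(u,v) ∈ G.edgeSet
        · rw [if_pos he, if_pos he, hDmk]
          have h1 := (hgb u).1; have h2 := (hgb v).1; linarith
        · rw [if_neg he, if_neg he]; norm_num
    · rw [hω', hω, hδ]; simp only; rw [if_neg he, if_neg he]; norm_num
    · induction e using Sym2.ind with
      | _ u v =>
        have hu : g u = 0 := hgnl u (hint u (Sym2.mem_mk_left u v))
        have hv : g v = 0 := hgnl v (hint v (Sym2.mem_mk_right u v))
        rw [hω', hω, hδ]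
        simp only
        rw [if_pos he, if_pos he, hDmk, hu, hv]
        norm_num
  have hleafsup : ∀ u : U, IsLeaf G u → u ∈ G.support := by
    intro u hu
    obtain ⟨z, hz⟩ := Set.ncard_eq_one.mp hu
    have hm : z ∈ G.neighborSet u := by rw [hz]; exact Set.mem_singleton z
    exact G.mem_support.mpr ⟨z, hm⟩
  have key : ∀ a b : U, a ∈ X → b ∈ X → a ≠ b →
      tdist G ω' a b = tdist G ω a b + (g a + g b) := by
    intro a b ha hb hab
    have hal : IsLeaf G a := by rw [hT.leaves_eq] at ha; exact ha
    have hbl : IsLeaf G b := by rw [hT.leaves_eq] at hb; exact hb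
    obtain ⟨p0⟩ := hT.connected a (hleafsup a hal) b (hleafsup b hbl)
    have hp : p0.bypass.IsPath := p0.bypass_isPath
    rw [tdist_eq_sum hT.acyclic p0.bypass hp, tdist_eq_sum hT.acyclic p0.bypass hp]
    have hsplit : (p0.bypass.edges.map ω').sum
        = (p0.bypass.edges.map ω).sum + (p0.bypass.edges.map δ).sum := by
      rw [hω']; exact list_sum_map_add _ _ _
    rw [hsplit]
    congr 1
    have hmap : p0.bypass.edges.map δ = p0.bypass.edges.map D := by
      refine List.map_congr_left (fun e he => ?_)
      rw [hδ]; simp only; exact if_pos (p0.bypass.edges_subset_edgeSet he)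
    rw [hmap, hD]
    refine sum_pendant g p0.bypass hp hab (fun v hv hva hvb => ?_)
    by_cases hvl : IsLeaf G v
    · exact absurd (leaf_not_internal p0.bypass hp hv hva hvb hvl) not_false
    · exact hgnl v hvl
  have hiso : LIso L G ω G ω' := by
    intro a b hab
    have hd := hL _ hab
    have hane : a ≠ b := by
      intro hEq
      exact hd.1 (by rw [hEq]; exact Sym2.mk_isDiag_iff.mpr rfl)
    have haX : a ∈ X := hd.2 a (Sym2.mem_mk_left a b)
    have hbX : b ∈ X := hd.2 b (Sym2.mem_mk_right a b)
    have hal : IsLeaf G a := by rw [hT.leaves_eq] at haX; exact haX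
    have hbl : IsLeaf G b := by rw [hT.leaves_eq] at hbX; exact hbX
    rw [key a b haX hbX hane, hgleaf a hal, hgleaf b hbl]
    have hsum : ε a + ε b = 0 := by
      have hadjab : Γ.Adj a b := by
        rw [hΓ, SimpleGraph.fromEdgeSet_adj]; exact ⟨hab, hane⟩
      by_cases hra : Γ.Reachable x a
      · have hrb : Γ.Reachable x b := hra.trans ⟨hadjab.toWalk⟩
        have hfab : f a ≠ f b := hf a b hra hadjab
        rw [hε]
        simp only [if_pos hra, if_pos hrb]
        cases hfa : f a <;> cases hfb : f b <;>
          simp [hfa, hfb] at hfab ⊢ <;> norm_num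
      · have hrb : ¬ Γ.Reachable x b := by
          intro hrb
          exact hra (hrb.trans ⟨hadjab.symm.toWalk⟩)
        rw [hε]
        simp only [if_neg hra, if_neg hrb]
        norm_num
    rw [hsum]
    ring
  have heq := h ω ω' hWω hWω' hiso
  have hval := congrFun heq s(x, w)
  have hexw : s(x, w) ∈ G.edgeSet := hadj
  have hgw : g w = 0 := hgnl w hwnl
  have hεx : ε x ≠ 0 := by
    rw [hε]
    simp only [if_pos (SimpleGraph.Reachable.refl x)]
    split <;> norm_num
  apply hεx
  have h1 : ω s(x, w) = 1 := by rw [hω]; simp only; rw [if_pos hexw]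
  have h2 : δ s(x, w) = ε x := by
    rw [hδ]; simp only
    rw [if_pos hexw, hDmk, hgw, hgleaf x hxleaf]
    ring
  rw [hω'] at hval
  simp only at hval
  rw [h1, h2] at hval
  linarith


end Lasso
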